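/- Let m be an even positive integer, let g be a bent function on F_{2^{m−1}} × F_2 with g(0,0) = g(0,1) = 0, let b ∈ F_{2^{m−1}} \ F_2, and let H = { λ ∈ F_{2^{m−1}} : Tr^{m−1}_1(λ) = 0 }. For u, ε ∈ F_2 set T_{u,ε} = { (λ₁,λ₂) ∈ H × H : W_g(b λ₁ + λ₂, u) = (−1)^ε 2^{m/2} }. Then #T_{0,ε} = 2^{m−2} ( 2^{m−3} + (−1)^ε 2^{(m−4)/2} ) and #T_{1,ε} = 2^{m−2} · 2^{m−3}. -/

import Mathlib

open Finset

noncomputable section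

abbrev Fq (n : ℕ) := GaloisField 2 n

noncomputable instance (n : ℕ) : Fintype (Fq n) := Fintype.ofFinite _

/-- Absolute trace from `F_{2^n}` to `F_2`. -/
noncomputable def tr1 (n : ℕ) (x : Fq n) : ZMod 2 :=
  Algebra.trace (ZMod 2) (Fq n) x

/-- `(-1)^x` for `x : F_2`, as an integer. -/
def chi (x : ZMod 2) : ℤ := (-1 : ℤ) ^ x.val

/-- Walsh transform of a Boolean function on `F_{2^n} × F_2`. -/
noncomputable def walsh (n : ℕ) (f : Fq n × ZMod 2 → ZMod 2)
    (lam : Fq n) (nu : ZMod 2) : ℤ :=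
  ∑ x : Fq n × ZMod 2, chi (f x + tr1 n (lam * x.1) + nu * x.2)

/-- A Boolean function on `F_{2^{m-1}} × F_2` is bent if all its Walsh coefficients
are `± 2^(m/2)`. -/
def IsBent (m : ℕ) (f : Fq (m - 1) × ZMod 2 → ZMod 2) : Prop :=
  ∀ lam nu, walsh (m - 1) f lam nu = 2 ^ (m / 2) ∨ walsh (m - 1) f lam nu = -(2 ^ (m / 2))

/-- Cyclic bent function on `F_{2^{m-1}} × F_2`. -/
def IsCyclicBent (m : ℕ) (f : Fq (m - 1) × ZMod 2 → ZMod 2) : Prop :=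
  ∀ a b : Fq (m - 1), a ≠ b → ∀ ε : ZMod 2,
    IsBent m fun x => f (a * x.1, x.2) + f (b * x.1, x.2 + ε)

noncomputable instance (n : ℕ) : DecidableEq (Fq n) := Classical.decEq _

lemma tr_nondeg (n : ℕ) (a : Fq n) (ha : a ≠ 0) : ∃ y, tr1 n (a * y) ≠ 0 := by
  have := traceForm_nondegenerate (ZMod 2) (Fq n)
  by_contra! hf
  exact ha (this.1 a fun y => by simpa [Algebra.traceForm_apply, tr1] using hf y)

lemma zmod2_cases (x : ZMod 2) : x = 0 ∨ x = 1 := by revert x; decide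

lemma chi_add (x y : ZMod 2) : chi (x + y) = chi x * chi y := by revert x y; decide

lemma tr1_add (n : ℕ) (x y : Fq n) : tr1 n (x + y) = tr1 n x + tr1 n y := by
  simp [tr1, map_add]

lemma tr1_zero (n : ℕ) : tr1 n 0 = 0 := map_zero _

lemma fq_card (n : ℕ) (hn : n ≠ 0) : Fintype.card (Fq n) = 2 ^ n := by
  rw [← Nat.card_eq_fintype_card, GaloisField.card 2 n hn]

lemma sum_chi_tr (n : ℕ) (hn : n ≠ 0) (a : Fq n) :
    ∑ μ : Fq n, chi (tr1 n (μ * a)) = if a = 0 then (2:ℤ)^n else 0 := by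
  split_ifs with h
  · subst h; simp [tr1, chi, fq_card n hn]
  · obtain ⟨y, hy⟩ := tr_nondeg n a h
    have key : ∑ μ : Fq n, chi (tr1 n (μ * a)) =
        ∑ μ : Fq n, chi (tr1 n ((μ + y) * a)) :=
      (Fintype.sum_equiv (Equiv.addRight y) _ _ (fun μ => rfl)).symm
    have h2 : ∀ μ : Fq n, chi (tr1 n ((μ + y) * a)) =
        chi (tr1 n (μ * a)) * chi (tr1 n (a * y)) := by
      intro μ
      rw [add_mul, tr1_add, chi_add, mul_comm y a]
    rw [Finset.sum_congr rfl (fun μ _ => h2 μ), ← Finset.sum_mul] at key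
    have hc : chi (tr1 n (a * y)) = -1 := by
      have h' : tr1 n (a * y) = 1 := (zmod2_cases _).resolve_left hy
      rw [h']; decide
    rw [hc] at key
    linarith [key]

lemma zmod2_add_ne (a b : ZMod 2) : a + b ≠ 0 ↔ a ≠ b := by revert a b; decide

lemma sum_zmod2 (F : ZMod 2 → ℤ) : ∑ x : ZMod 2, F x = F 0 + F 1 := by
  rw [show (univ : Finset (ZMod 2)) = {0, 1} from rfl]
  simp

lemma sum_walsh (n : ℕ) (hn : n ≠ 0) (g : Fq n × ZMod 2 → ZMod 2)
    (h00 : g (0,0) = 0) (h01 : g (0,1) = 0) (u : ZMod 2) :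
    ∑ μ : Fq n, walsh n g μ u = 2^n * (1 + chi u) := by
  unfold walsh
  rw [Finset.sum_comm]
  have key : ∀ x : Fq n × ZMod 2, ∑ μ : Fq n, chi (g x + tr1 n (μ * x.1) + u * x.2)
      = chi (g x + u * x.2) * (if x.1 = 0 then (2:ℤ)^n else 0) := by
    intro x
    rw [← sum_chi_tr n hn x.1, Finset.mul_sum]
    refine Finset.sum_congr rfl fun μ _ => ?_
    rw [← chi_add]
    congr 1
    ring
  rw [Finset.sum_congr rfl fun x _ => key x]
  rw [Fintype.sum_prod_type]
  rw [Finset.sum_eq_single (0 : Fq n)]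
  · rw [sum_zmod2]
    simp [show g 0 = 0 from h00, h00, h01, chi]
    ring
  · intro x₁ _ hx₁
    simp [hx₁]
  · intro h; exact absurd (Finset.mem_univ _) h

lemma exists_ne_pair (n : ℕ) (b : Fq n) (hb0 : b ≠ 0) (hb1 : b ≠ 1) :
    (∃ p : Fq n, tr1 n p = 1 ∧ tr1 n (b * p) = 0) ∧
    (∃ q : Fq n, tr1 n q = 0 ∧ tr1 n (b * q) = 1) := by
  have hsum : ∀ y : Fq n, tr1 n ((1 + b) * y) = tr1 n y + tr1 n (b * y) := by
    intro y; rw [add_mul, one_mul, tr1_add]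
  obtain ⟨y, hy⟩ := tr_nondeg n (1 + b) (by
    intro h
    apply hb1
    have : b = -1 := by linear_combination h
    rwa [show (-1 : Fq n) = 1 by rw [neg_eq_iff_add_eq_zero]; exact CharTwo.add_self_eq_zero 1] at this)
  rw [hsum y] at hy
  have hyne : tr1 n y ≠ tr1 n (b * y) := by
    intro h; exact hy (by rw [h, CharTwo.add_self_eq_zero])
  constructor
  · by_contra hcon
    push_neg at hcon
    have himp : ∀ p : Fq n, tr1 n p = 1 → tr1 n (b * p) = 1 := by
      intro p hp
      rcases zmod2_cases (tr1 n (b * p)) with h | h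
      · exact absurd h (hcon p hp)
      · exact h
    obtain ⟨x, hx⟩ := tr_nondeg n 1 one_ne_zero
    rw [one_mul] at hx
    have hx1 : tr1 n x = 1 := (zmod2_cases _).resolve_left hx
    have hbx : tr1 n (b * x) = 1 := himp x hx1
    rcases zmod2_cases (tr1 n y) with h | h
    · -- tr y = 0 , tr (b y) = 1
      have hby : tr1 n (b * y) = 1 := by
        rcases zmod2_cases (tr1 n (b * y)) with h' | h'
        · exact absurd (h.trans h'.symm) hyne
        · exact h'
      have hxy : tr1 n (x + y) = 1 := by rw [tr1_add, hx1, h, add_zero]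
      have := himp (x + y) hxy
      rw [mul_add, tr1_add, hbx, hby] at this
      exact absurd this (by decide)
    · have : tr1 n (b * y) = 1 := himp y h
      exact hyne (h.trans this.symm)
  · by_contra hcon
    push_neg at hcon
    have himp : ∀ q : Fq n, tr1 n q = 0 → tr1 n (b * q) = 0 := by
      intro q hq
      rcases zmod2_cases (tr1 n (b * q)) with h | h
      · exact h
      · exact absurd h (hcon q hq)
    obtain ⟨z, hz⟩ := tr_nondeg n b hb0
    have hbz : tr1 n (b * z) = 1 := (zmod2_cases _).resolve_left hz
    have hz1 : tr1 n z = 1 := by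
      rcases zmod2_cases (tr1 n z) with h | h
      · exact absurd (himp z h) (by rw [hbz]; decide)
      · exact h
    have hy1 : tr1 n y = 1 := by
      rcases zmod2_cases (tr1 n y) with h | h
      · exact absurd (himp y h) (h ▸ hyne).symm
      · exact h
    have hby : tr1 n (b * y) = 0 := by
      rcases zmod2_cases (tr1 n (b * y)) with h | h
      · exact h
      · exact absurd (hy1.trans h.symm) hyne
    have hzy : tr1 n (z + y) = 0 := by
      rw [tr1_add, hz1, hy1]; decide
    have := himp (z + y) hzy
    rw [mul_add, tr1_add, hbz, hby] at this
    exact absurd this (by decide)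

lemma exists_pair (n : ℕ) (b : Fq n) (hb0 : b ≠ 0) (hb1 : b ≠ 1) (c d : ZMod 2) :
    ∃ lam : Fq n, tr1 n lam = c ∧ tr1 n (b * lam) = d := by
  obtain ⟨⟨p, hp1, hp2⟩, ⟨q, hq1, hq2⟩⟩ := exists_ne_pair n b hb0 hb1
  refine ⟨(if c = 1 then p else 0) + (if d = 1 then q else 0), ?_, ?_⟩
  · rw [tr1_add]
    rcases zmod2_cases c with rfl | rfl <;> rcases zmod2_cases d with rfl | rfl <;>
      simp [hp1, hq1, hp2, hq2, tr1_zero]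
  · rw [mul_add, tr1_add]
    rcases zmod2_cases c with rfl | rfl <;> rcases zmod2_cases d with rfl | rfl <;>
      simp [hp1, hq1, hp2, hq2, tr1_zero]

lemma fiber_card (n : ℕ) (hn : 2 ≤ n) (b : Fq n) (hb0 : b ≠ 0) (hb1 : b ≠ 1)
    (c d : ZMod 2) :
    (univ.filter fun x : Fq n => tr1 n x = c ∧ tr1 n (b * x) = d).card = 2 ^ (n - 2) := by
  have hshift : ∀ c d : ZMod 2,
      (univ.filter fun x : Fq n => tr1 n x = c ∧ tr1 n (b * x) = d).card
      = (univ.filter fun x : Fq n => tr1 n x = 0 ∧ tr1 n (b * x) = 0).card := by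
    intro c d
    obtain ⟨l, hl1, hl2⟩ := exists_pair n b hb0 hb1 c d
    refine Finset.card_nbij' (fun x => x + l) (fun x => x + l) ?_ ?_ ?_ ?_
    · intro a ha
      simp only [Finset.mem_coe, Finset.mem_filter, Finset.mem_univ, true_and] at ha ⊢
      rw [tr1_add, mul_add, tr1_add, ha.1, ha.2, hl1, hl2]
      constructor <;> exact CharTwo.add_self_eq_zero _
    · intro a ha
      simp only [Finset.mem_coe, Finset.mem_filter, Finset.mem_univ, true_and] at ha ⊢
      rw [tr1_add, mul_add, tr1_add, ha.1, ha.2, hl1, hl2, zero_add, zero_add]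
      exact ⟨rfl, rfl⟩
    · intro a _; show a + l + l = a; rw [add_assoc, CharTwo.add_self_eq_zero, add_zero]
    · intro a _; show a + l + l = a; rw [add_assoc, CharTwo.add_self_eq_zero, add_zero]
  have hpart : Fintype.card (Fq n) =
      ∑ v : ZMod 2 × ZMod 2,
        (univ.filter fun x : Fq n => (tr1 n x, tr1 n (b * x)) = v).card := by
    rw [← Finset.card_univ]
    exact Finset.card_eq_sum_card_fiberwise (fun x _ => Finset.mem_univ _)
  have heq : ∀ v : ZMod 2 × ZMod 2,
      (univ.filter fun x : Fq n => (tr1 n x, tr1 n (b * x)) = v).card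
      = (univ.filter fun x : Fq n => tr1 n x = 0 ∧ tr1 n (b * x) = 0).card := by
    intro ⟨v1, v2⟩
    rw [← hshift v1 v2]
    congr 1
    apply Finset.filter_congr
    intro x _
    simp [Prod.ext_iff]
  rw [Finset.sum_congr rfl fun v _ => heq v, Finset.sum_const, fq_card n (by omega)] at hpart
  have hc4 : (univ : Finset (ZMod 2 × ZMod 2)).card = 4 := rfl
  rw [hc4, smul_eq_mul] at hpart
  have h2n : 2 ^ n = 4 * 2 ^ (n - 2) := by
    have hh : n = 2 + (n - 2) := by omega
    rw [hh, pow_add]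
    norm_num
  rw [hshift c d]
  omega

lemma main_count (n : ℕ) (hn : 2 ≤ n) (g : Fq n × ZMod 2 → ZMod 2)
    (b : Fq n) (hb0 : b ≠ 0) (hb1 : b ≠ 1) (u : ZMod 2) (t : ℤ) :
    (univ.filter fun p : Fq n × Fq n =>
        tr1 n p.1 = 0 ∧ tr1 n p.2 = 0 ∧ walsh n g (b * p.1 + p.2) u = t).card
    = (univ.filter fun μ : Fq n => walsh n g μ u = t).card * 2 ^ (n - 2) := by
  classical
  rw [Finset.card_eq_sum_card_fiberwise
    (f := fun p : Fq n × Fq n => b * p.1 + p.2) (t := univ) (fun x _ => Finset.mem_univ _)]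
  have key : ∀ μ : Fq n,
      ((univ.filter fun p : Fq n × Fq n =>
        tr1 n p.1 = 0 ∧ tr1 n p.2 = 0 ∧ walsh n g (b * p.1 + p.2) u = t).filter
          (fun p => b * p.1 + p.2 = μ)).card
      = if walsh n g μ u = t then 2 ^ (n - 2) else 0 := by
    intro μ
    rw [Finset.filter_filter]
    split_ifs with hQ
    · have hset : (univ.filter fun p : Fq n × Fq n =>
          (tr1 n p.1 = 0 ∧ tr1 n p.2 = 0 ∧ walsh n g (b * p.1 + p.2) u = t)
            ∧ b * p.1 + p.2 = μ)
          = univ.filter fun p : Fq n × Fq n =>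
            tr1 n p.1 = 0 ∧ tr1 n p.2 = 0 ∧ b * p.1 + p.2 = μ := by
        apply Finset.filter_congr
        intro p _
        constructor
        · rintro ⟨⟨h1, h2, _⟩, h4⟩; exact ⟨h1, h2, h4⟩
        · rintro ⟨h1, h2, h4⟩; exact ⟨⟨h1, h2, h4 ▸ hQ⟩, h4⟩
      rw [hset]
      rw [← fiber_card n hn b hb0 hb1 0 (tr1 n μ)]
      apply Finset.card_nbij' (fun p => p.1) (fun l => (l, μ + b * l))
      · intro p hp
        simp only [Finset.mem_coe, Finset.mem_filter, Finset.mem_univ, true_and] at hp ⊢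
        obtain ⟨h1, h2, h4⟩ := hp
        refine ⟨h1, ?_⟩
        have : b * p.1 = μ + p.2 := by
          rw [← h4]; rw [add_assoc, CharTwo.add_self_eq_zero, add_zero]
        rw [this, tr1_add, h2, add_zero]
      · intro l hl
        simp only [Finset.mem_coe, Finset.mem_filter, Finset.mem_univ, true_and] at hl ⊢
        obtain ⟨h1, h2⟩ := hl
        refine ⟨h1, ?_, ?_⟩
        · rw [tr1_add, h2, CharTwo.add_self_eq_zero]
        · rw [← add_assoc, add_comm (b*l) μ, add_assoc, CharTwo.add_self_eq_zero, add_zero]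
      · intro p hp
        simp only [Finset.mem_coe, Finset.mem_filter, Finset.mem_univ, true_and] at hp
        obtain ⟨h1, h2, h4⟩ := hp
        show (p.1, μ + b * p.1) = p
        have : μ + b * p.1 = p.2 := by
          rw [← h4, add_comm (b*p.1) p.2, add_assoc, CharTwo.add_self_eq_zero, add_zero]
        rw [this]
      · intro l _; rfl
    · rw [Finset.card_eq_zero, Finset.filter_eq_empty_iff]
      rintro p _ ⟨⟨_, _, h3⟩, h4⟩
      exact hQ (h4 ▸ h3)
  rw [Finset.sum_congr rfl fun μ _ => key μ, ← Finset.sum_filter, Finset.sum_const, smul_eq_mul]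

lemma ST_count (n : ℕ) (hn : n ≠ 0) (g : Fq n × ZMod 2 → ZMod 2)
    (h00 : g (0,0) = 0) (h01 : g (0,1) = 0) (P : ℤ) (hP : 0 < P) (u : ZMod 2)
    (hbent : ∀ lam, walsh n g lam u = P ∨ walsh n g lam u = -P) :
    ((univ.filter fun μ : Fq n => walsh n g μ u = P).card : ℤ)
      + (univ.filter fun μ : Fq n => walsh n g μ u = -P).card = 2^n ∧
    (((univ.filter fun μ : Fq n => walsh n g μ u = P).card : ℤ)
      - (univ.filter fun μ : Fq n => walsh n g μ u = -P).card) * P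
        = 2^n * (1 + chi u) := by
  classical
  set S := univ.filter fun μ : Fq n => walsh n g μ u = P with hS
  set T := univ.filter fun μ : Fq n => walsh n g μ u = -P with hT
  have hdisj : Disjoint S T := by
    rw [Finset.disjoint_left]
    intro μ h1 h2
    rw [hS, Finset.mem_filter] at h1
    rw [hT, Finset.mem_filter] at h2
    have := h1.2.symm.trans h2.2
    omega
  have hunion : S ∪ T = univ := by
    apply Finset.eq_univ_iff_forall.mpr
    intro μ
    rw [Finset.mem_union, hS, hT, Finset.mem_filter, Finset.mem_filter]
    rcases hbent μ with h | h
    · exact Or.inl ⟨Finset.mem_univ _, h⟩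
    · exact Or.inr ⟨Finset.mem_univ _, h⟩
  have hcard : S.card + T.card = 2 ^ n := by
    rw [← Finset.card_union_of_disjoint hdisj, hunion, Finset.card_univ, fq_card n hn]
  have hsumS : ∑ μ ∈ S, walsh n g μ u = (S.card : ℤ) * P := by
    rw [Finset.sum_congr rfl (fun μ hμ => (Finset.mem_filter.mp hμ).2),
      Finset.sum_const, nsmul_eq_mul]
  have hsumT : ∑ μ ∈ T, walsh n g μ u = (T.card : ℤ) * (-P) := by
    rw [Finset.sum_congr rfl (fun μ hμ => (Finset.mem_filter.mp hμ).2),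
      Finset.sum_const, nsmul_eq_mul]
  have hsum : ∑ μ : Fq n, walsh n g μ u = 2^n * (1 + chi u) :=
    sum_walsh n hn g h00 h01 u
  rw [← hunion, Finset.sum_union hdisj, hsumS, hsumT] at hsum
  constructor
  · exact_mod_cast hcard
  · rw [sub_mul, ← hsum]; ring


/-- counting pairs `(λ₁,λ₂) ∈ H × H` (with
`H = {λ : Tr(λ) = 0}`) on which `W_g(b λ₁ + λ₂, u)` takes a prescribed sign. -/
theorem stmt14 (m : ℕ) (hm : Even m) (hm0 : 0 < m)
    (g : Fq (m - 1) × ZMod 2 → ZMod 2) (hg : IsBent m g)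
    (h00 : g (0, 0) = 0) (h01 : g (0, 1) = 0)
    (b : Fq (m - 1)) (hb0 : b ≠ 0) (hb1 : b ≠ 1) (ε : ZMod 2) :
    (((Finset.univ.filter fun p : Fq (m - 1) × Fq (m - 1) =>
        tr1 (m - 1) p.1 = 0 ∧ tr1 (m - 1) p.2 = 0 ∧
        walsh (m - 1) g (b * p.1 + p.2) 0 = (-1 : ℤ) ^ ε.val * 2 ^ (m / 2)).card : ℝ)
      = (2 : ℝ) ^ ((m : ℝ) - 2)
          * ((2 : ℝ) ^ ((m : ℝ) - 3) + (-1 : ℝ) ^ ε.val * (2 : ℝ) ^ (((m : ℝ) - 4) / 2))) ∧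
    (((Finset.univ.filter fun p : Fq (m - 1) × Fq (m - 1) =>
        tr1 (m - 1) p.1 = 0 ∧ tr1 (m - 1) p.2 = 0 ∧
        walsh (m - 1) g (b * p.1 + p.2) 1 = (-1 : ℤ) ^ ε.val * 2 ^ (m / 2)).card : ℝ)
      = (2 : ℝ) ^ ((m : ℝ) - 2) * (2 : ℝ) ^ ((m : ℝ) - 3)) := by
  obtain ⟨k0, hk0⟩ := hm
  by_cases hm4 : m < 4
  · exfalso
    have hm2 : m = 2 := by omega
    subst hm2
    have hcard : Fintype.card (Fq 1) = 2 := fq_card 1 one_ne_zero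
    have hb := FiniteField.pow_card b
    rw [hcard] at hb
    have h2 : b * (b - 1) = 0 := by linear_combination hb
    rcases mul_eq_zero.mp h2 with h | h
    · exact hb0 h
    · exact hb1 (by linear_combination h)
  · push_neg at hm4
    obtain ⟨k, hmk⟩ : ∃ k, m = 2 * k := ⟨k0, by omega⟩
    have hm2 : m / 2 = k := by omega
    have hk2 : 2 ≤ k := by omega
    have hn0 : m - 1 ≠ 0 := by omega
    have hn2 : 2 ≤ m - 1 := by omega
    have hP : (0:ℤ) < 2^(m/2) := by positivity
    obtain ⟨h0sum, h0dif⟩ :=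
      ST_count (m-1) hn0 g h00 h01 (2^(m/2)) hP 0 (fun lam => hg lam 0)
    obtain ⟨h1sum, h1dif⟩ :=
      ST_count (m-1) hn0 g h00 h01 (2^(m/2)) hP 1 (fun lam => hg lam 1)
    rw [show chi 0 = 1 from rfl] at h0dif
    rw [show chi 1 = -1 by decide] at h1dif
    set A0 := (univ.filter fun μ : Fq (m-1) => walsh (m-1) g μ 0 = 2^(m/2)).card with hA0def
    set T0 := (univ.filter fun μ : Fq (m-1) => walsh (m-1) g μ 0 = -(2^(m/2))).card with hT0def
    set A1 := (univ.filter fun μ : Fq (m-1) => walsh (m-1) g μ 1 = 2^(m/2)).card with hA1def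
    set T1 := (univ.filter fun μ : Fq (m-1) => walsh (m-1) g μ 1 = -(2^(m/2))).card with hT1def
    -- power identities over ℤ
    have e1 : (2:ℤ)^(m-1) = 2 * 2^(2*k-2) := by
      rw [show m-1 = (2*k-2)+1 from by omega, pow_succ]; ring
    have e2 : (2:ℤ)^(m/2) = 2 * 2^(k-1) := by
      rw [hm2]
      conv_lhs => rw [show k = (k-1)+1 from by omega]
      rw [pow_succ]; ring
    have epow : (2:ℤ)^(m-1) * (1+1) = 2^(m/2) * 2^(m/2) := by
      rw [hm2, ← pow_add, show k+k = (m-1)+1 from by omega, pow_succ]; ring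
    have h0dif' : (A0:ℤ) - T0 = 2^(m/2) :=
      mul_right_cancel₀ (ne_of_gt hP) (h0dif.trans epow)
    have h1dif' : (A1:ℤ) = T1 := by
      have h := h1dif
      rw [show ((2:ℤ)^(m-1) * (1 + -1)) = 0 from by ring] at h
      rcases mul_eq_zero.mp h with h' | h'
      · linarith
      · exact absurd h' (by positivity)
    have hA0 : (A0:ℤ) = 2^(2*k-2) + 2^(k-1) := by linarith
    have hT0 : (T0:ℤ) = 2^(2*k-2) - 2^(k-1) := by linarith
    have hA1 : (A1:ℤ) = 2^(2*k-2) := by linarith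
    have hT1 : (T1:ℤ) = 2^(2*k-2) := by linarith
    -- final assembly
    have hmr : (m:ℝ) = 2*k := by rw [hmk]; push_cast; ring
    have c1 : (2:ℝ) ^ ((m:ℝ) - 2) = 2 ^ (2*k-2 : ℕ) := by
      rw [show ((m:ℝ) - 2) = ((2*k-2 : ℕ) : ℝ) from by
        rw [Nat.cast_sub (by omega)]; push_cast [hmr]; ring, Real.rpow_natCast]
    have c2 : (2:ℝ) ^ ((m:ℝ) - 3) = 2 ^ (2*k-3 : ℕ) := by
      rw [show ((m:ℝ) - 3) = ((2*k-3 : ℕ) : ℝ) from by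
        rw [Nat.cast_sub (by omega)]; push_cast [hmr]; ring, Real.rpow_natCast]
    have c3 : (2:ℝ) ^ (((m:ℝ) - 4)/2) = 2 ^ (k-2 : ℕ) := by
      rw [show (((m:ℝ) - 4)/2) = ((k-2 : ℕ) : ℝ) from by
        rw [Nat.cast_sub (by omega)]; push_cast [hmr]; ring, Real.rpow_natCast]
    have hp : (2:ℝ)^(k-1) * 2^(2*k-3) = 2^(2*k-2) * 2^(k-2) := by
      rw [← pow_add, ← pow_add, show (k-1)+(2*k-3) = (2*k-2)+(k-2) from by omega]
    have hA0R : (A0:ℝ) = 2^(2*k-2) + 2^(k-1) := by exact_mod_cast hA0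
    have hT0R : (T0:ℝ) = 2^(2*k-2) - 2^(k-1) := by exact_mod_cast hT0
    have hA1R : (A1:ℝ) = 2^(2*k-2) := by exact_mod_cast hA1
    have hT1R : (T1:ℝ) = 2^(2*k-2) := by exact_mod_cast hT1
    have hexp : m - 1 - 2 = 2*k-3 := by omega
    rcases zmod2_cases ε with rfl | rfl
    · simp only [ZMod.val_zero, pow_zero, one_mul]
      constructor
      · rw [main_count (m-1) hn2 g b hb0 hb1 0 (2^(m/2)), ← hA0def, hexp, c1, c2, c3]
        push_cast [hA0R]
        linear_combination hp
      · rw [main_count (m-1) hn2 g b hb0 hb1 1 (2^(m/2)), ← hA1def, hexp, c1, c2]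
        push_cast [hA1R]
        ring
    · simp only [ZMod.val_one, pow_one, neg_one_mul]
      constructor
      · rw [main_count (m-1) hn2 g b hb0 hb1 0 (-(2^(m/2))), ← hT0def, hexp, c1, c2, c3]
        push_cast [hT0R]
        linear_combination -hp
      · rw [main_count (m-1) hn2 g b hb0 hb1 1 (-(2^(m/2))), ← hT1def, hexp, c1, c2]
        push_cast [hT1R]
        ring
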